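/- Let w, μ, S₀ > 0. Every solution (ℰ(ξ), 𝒱(ξ)) of the ODE system ℰ' = -S₀𝒱/(𝒱 - w), 𝒱' = ℰ(𝒱 - w)²/((𝒱 - w)³ + μ w S₀), defined on an interval where 𝒱 ≠ w and (𝒱 - w)³ + μ w S₀ ≠ 0, conserves the quantity Ψ(ℰ, 𝒱) = ℰ² + S₀𝒱² - w μ S₀² (2𝒱 - w)/(𝒱 - w)². -/

import Mathlib

/-- The traveling-wave system for the blood flow model conserves
`Ψ(ℰ,𝒱) = ℰ² + S₀𝒱² - wμS₀²(2𝒱 - w)/(𝒱 - w)²`. -/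
theorem stmt_10 (w μ S₀ : ℝ) (hw : 0 < w) (hμ : 0 < μ) (hS : 0 < S₀)
    (J : Set ℝ) (hJ : Convex ℝ J) (E V : ℝ → ℝ)
    (hne : ∀ ξ ∈ J, V ξ ≠ w)
    (hden : ∀ ξ ∈ J, (V ξ - w) ^ 3 + μ * w * S₀ ≠ 0)
    (hE : ∀ ξ ∈ J, HasDerivAt E (-(S₀ * V ξ) / (V ξ - w)) ξ)
    (hV : ∀ ξ ∈ J, HasDerivAt V
      (E ξ * (V ξ - w) ^ 2 / ((V ξ - w) ^ 3 + μ * w * S₀)) ξ) :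
    ∀ a ∈ J, ∀ b ∈ J,
      (E a) ^ 2 + S₀ * (V a) ^ 2 - w * μ * S₀ ^ 2 * (2 * V a - w) / (V a - w) ^ 2
        = (E b) ^ 2 + S₀ * (V b) ^ 2
            - w * μ * S₀ ^ 2 * (2 * V b - w) / (V b - w) ^ 2 := by
  set f : ℝ → ℝ := fun ξ =>
    E ξ ^ 2 + S₀ * V ξ ^ 2 - w * μ * S₀ ^ 2 * (2 * V ξ - w) / (V ξ - w) ^ 2 with hf
  have key : ∀ ξ ∈ J, HasDerivAt f 0 ξ := by
    intro ξ hξ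
    have hE' := hE ξ hξ
    have hV' := hV ξ hξ
    have h1 : V ξ - w ≠ 0 := sub_ne_zero.mpr (hne ξ hξ)
    have hd := hden ξ hξ
    have hsq : (V ξ - w) ^ 2 ≠ 0 := pow_ne_zero _ h1
    have hnum : HasDerivAt (fun ξ => w * μ * S₀ ^ 2 * (2 * V ξ - w))
        (w * μ * S₀ ^ 2 * (2 * (E ξ * (V ξ - w) ^ 2 / ((V ξ - w) ^ 3 + μ * w * S₀)))) ξ :=
      (((hV'.const_mul 2).sub_const w).const_mul _)
    have hden2 : HasDerivAt (fun ξ => (V ξ - w) ^ 2)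
        ((2 : ℕ) * (V ξ - w) ^ 1 * (E ξ * (V ξ - w) ^ 2 / ((V ξ - w) ^ 3 + μ * w * S₀))) ξ :=
      (hV'.sub_const w).pow 2
    have H := ((hE'.pow 2).add ((hV'.pow 2).const_mul S₀)).sub (hnum.div hden2 hsq)
    convert H using 1
    · rfl
    · rfl
    · rfl
    have hd' : (V ξ - w) ^ 3 + S₀ * w * μ ≠ 0 := by convert hd using 2; ring
    field_simp
    ring
  intro a ha b hb
  have h0 : ∀ ξ ∈ J, HasDerivWithinAt f ((fun _ => (0:ℝ)) ξ) J ξ :=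
    fun ξ hξ => (key ξ hξ).hasDerivWithinAt
  have hb0 : ∀ ξ ∈ J, ‖(fun _ => (0:ℝ)) ξ‖ ≤ 0 := by simp
  have := hJ.norm_image_sub_le_of_norm_hasDerivWithin_le h0 hb0 hb ha
  have : f a = f b := by
    have h := this
    rw [zero_mul] at h
    have := norm_le_zero_iff.mp h
    linarith [sub_eq_zero.mp this]
  simpa [hf] using this
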